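/- arXiv:2202.05567 — 4 statements merged into one kernel-verified Lean document; each statement's English description precedes it below -/
import Mathlib

section
/- Let A and B be positive definite d×d real matrices with A ⪰ B (i.e., A - B is positive semidefinite). Then for any vector x ∈ ℝ^d, ‖x‖_{A⁻¹} ≤ ‖x‖_{B⁻¹} · √(det(B⁻¹)/det(A⁻¹)), where ‖x‖_M := √(xᵀ M x). -/
open Matrix

/-- Symmetry of the quadratic form for a real symmetric matrix. -/
lemma dot_mulVec_symm {d : ℕ} {M : Matrix (Fin d) (Fin d) ℝ} (hM : M.IsHermitian)
    (u v : Fin d → ℝ) : u ⬝ᵥ M *ᵥ v = v ⬝ᵥ M *ᵥ u := by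
  have h : Mᵀ = M := by
    have := hM.eq
    simpa [Matrix.conjTranspose_eq_transpose_of_trivial] using this
  calc u ⬝ᵥ M *ᵥ v = M *ᵥ v ⬝ᵥ u := dotProduct_comm _ _
    _ = v ᵥ* Mᵀ ⬝ᵥ u := by rw [vecMul_transpose]
    _ = v ⬝ᵥ Mᵀ *ᵥ u := by rw [Matrix.dotProduct_mulVec]
    _ = v ⬝ᵥ M *ᵥ u := by rw [h]

/-- Cauchy–Schwarz for a real positive semidefinite quadratic form. -/
lemma psd_cauchy_schwarz {d : ℕ} {M : Matrix (Fin d) (Fin d) ℝ} (hM : M.PosSemidef)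
    (u v : Fin d → ℝ) : (u ⬝ᵥ M *ᵥ v) ^ 2 ≤ (u ⬝ᵥ M *ᵥ u) * (v ⬝ᵥ M *ᵥ v) := by
  have key : ∀ t : ℝ, 0 ≤ (v ⬝ᵥ M *ᵥ v) * (t * t) + (2 * (u ⬝ᵥ M *ᵥ v)) * t + (u ⬝ᵥ M *ᵥ u) := by
    intro t
    have h0 := hM.dotProduct_mulVec_nonneg (u + t • v)
    simp only [star_trivial] at h0
    have hexp : (u + t • v) ⬝ᵥ M *ᵥ (u + t • v)
        = (v ⬝ᵥ M *ᵥ v) * (t * t) + (2 * (u ⬝ᵥ M *ᵥ v)) * t + (u ⬝ᵥ M *ᵥ u) := by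
      have hsymm := dot_mulVec_symm hM.1 v u
      simp only [Matrix.mulVec_add, Matrix.mulVec_smul, dotProduct_add, add_dotProduct,
        dotProduct_smul, smul_dotProduct, smul_eq_mul]
      ring_nf
      rw [hsymm]
      ring
    rw [hexp] at h0
    exact h0
  have hd : discrim (v ⬝ᵥ M *ᵥ v) (2 * (u ⬝ᵥ M *ᵥ v)) (u ⬝ᵥ M *ᵥ u) ≤ 0 :=
    discrim_le_zero key
  have hvv : 0 ≤ v ⬝ᵥ M *ᵥ v := by simpa using hM.dotProduct_mulVec_nonneg v
  rw [discrim] at hd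
  nlinarith [hd]

/-- For a real PSD matrix `Q`, `1 ≤ det (1 + Q)`. -/
lemma one_le_det_one_add {d : ℕ} {Q : Matrix (Fin d) (Fin d) ℝ} (hQ : Q.PosSemidef) :
    1 ≤ (1 + Q).det := by
  have hH := hQ.1
  set U : Matrix (Fin d) (Fin d) ℝ := (hH.eigenvectorUnitary : Matrix (Fin d) (Fin d) ℝ)
  have hU : U * star U = 1 := (Matrix.mem_unitaryGroup_iff).mp hH.eigenvectorUnitary.2
  have hspec : Q = U * diagonal (RCLike.ofReal ∘ hH.eigenvalues) * star U := hH.spectral_theorem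
  have hone : (1 : Matrix (Fin d) (Fin d) ℝ) = U * 1 * star U := by
    rw [Matrix.mul_one, hU]
  have hsum : 1 + Q = U * (1 + diagonal (RCLike.ofReal ∘ hH.eigenvalues)) * star U := by
    rw [Matrix.mul_add, Matrix.add_mul, ← hone, ← hspec]
  have hdetU : U.det * (star U).det = 1 := by
    rw [← Matrix.det_mul, hU, Matrix.det_one]
  have hdiag : (1 + diagonal (RCLike.ofReal ∘ hH.eigenvalues) : Matrix (Fin d) (Fin d) ℝ)
      = diagonal (fun i => 1 + hH.eigenvalues i) := by
    rw [← Matrix.diagonal_one, Matrix.diagonal_add]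
    rfl
  have hdet : (1 + Q).det = ∏ i, (1 + hH.eigenvalues i) := by
    rw [hsum, hdiag, Matrix.det_mul, Matrix.det_mul, Matrix.det_diagonal, mul_right_comm,
      hdetU, one_mul]
  rw [hdet]
  calc (1 : ℝ) = ∏ _i : Fin d, (1 : ℝ) := by simp
    _ ≤ ∏ i, (1 + hH.eigenvalues i) := by
        refine Finset.prod_le_prod (fun i _ => zero_le_one) (fun i _ => ?_)
        have := hQ.eigenvalues_nonneg i
        linarith

open scoped MatrixOrder in
/-- Determinant monotonicity: if `B` is posdef and `A - B` is PSD then `det B ≤ det A`. -/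
lemma det_mono_of_sub_posSemidef {d : ℕ} {A B : Matrix (Fin d) (Fin d) ℝ}
    (hB : B.PosDef) (hAB : (A - B).PosSemidef) : B.det ≤ A.det := by
  set S := CFC.sqrt B with hSdef
  have hSS : S * S = B := CFC.sqrt_mul_sqrt_self B hB.posSemidef.nonneg
  have hdetS : S.det * S.det = B.det := by rw [← Matrix.det_mul, hSS]
  have hdetB : 0 < B.det := hB.det_pos
  have hSne : S.det ≠ 0 := by
    intro h
    rw [h, mul_zero] at hdetS
    exact hdetB.ne' hdetS.symm
  have hSinv : S⁻¹ * S = 1 := Matrix.nonsing_inv_mul S (by simpa using hSne)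
  have hSinv' : S * S⁻¹ = 1 := Matrix.mul_nonsing_inv S (by simpa using hSne)
  have hSH : S.IsHermitian := (CFC.sqrt_nonneg B).posSemidef.1
  have hSinvH : (S⁻¹)ᴴ = S⁻¹ := by
    rw [Matrix.conjTranspose_nonsing_inv, hSH.eq]
  -- Q = S⁻¹ (A - B) S⁻¹ is PSD
  have hQ : (S⁻¹ * (A - B) * S⁻¹).PosSemidef := by
    have := hAB.mul_mul_conjTranspose_same S⁻¹
    rwa [hSinvH] at this
  have hmid : S⁻¹ * B * S⁻¹ = 1 := by
    rw [← hSS, ← Matrix.mul_assoc, hSinv, Matrix.one_mul, hSinv']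
  have hsum : 1 + S⁻¹ * (A - B) * S⁻¹ = S⁻¹ * A * S⁻¹ := by
    have hsplit : S⁻¹ * (A - B) * S⁻¹ = S⁻¹ * A * S⁻¹ - S⁻¹ * B * S⁻¹ := by
      noncomm_ring
    rw [hsplit, hmid]
    abel
  have hge := one_le_det_one_add hQ
  rw [hsum] at hge
  have hdetSinv : (S⁻¹).det = S.det⁻¹ := by
    rw [Matrix.det_nonsing_inv, Ring.inverse_eq_inv']
  rw [Matrix.det_mul, Matrix.det_mul, hdetSinv] at hge
  have h2 : B.det * (S.det⁻¹ * A.det * S.det⁻¹) = A.det := by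
    rw [← hdetS]
    field_simp
  nlinarith [mul_le_mul_of_nonneg_left hge hdetB.le, h2]

theorem weighted_norm_det_trick {d : ℕ} (A B : Matrix (Fin d) (Fin d) ℝ)
    (hA : A.PosDef) (hB : B.PosDef) (hAB : (A - B).PosSemidef) (x : Fin d → ℝ) :
    Real.sqrt (x ⬝ᵥ A⁻¹ *ᵥ x) ≤
      Real.sqrt (x ⬝ᵥ B⁻¹ *ᵥ x) * Real.sqrt (B⁻¹.det / A⁻¹.det) := by
  have hAinv : (A⁻¹).PosDef := hA.inv
  have hBinv : (B⁻¹).PosDef := hB.inv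
  have hAdet : 0 < A.det := hA.det_pos
  have hBdet : 0 < B.det := hB.det_pos
  have hAdetne : A.det ≠ 0 := hAdet.ne'
  have hBdetne : B.det ≠ 0 := hBdet.ne'
  -- Step 1: x ⬝ A⁻¹ x ≤ x ⬝ B⁻¹ x
  set y := A⁻¹ *ᵥ x with hy
  have hAmul : A * A⁻¹ = 1 := Matrix.mul_nonsing_inv A (by simpa using hAdetne)
  have hBmul : B * B⁻¹ = 1 := Matrix.mul_nonsing_inv B (by simpa using hBdetne)
  have hyx : y ⬝ᵥ x = x ⬝ᵥ A⁻¹ *ᵥ x := by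
    rw [hy, dotProduct_comm]
  have hyAy : y ⬝ᵥ A *ᵥ y = y ⬝ᵥ x := by
    rw [hy, Matrix.mulVec_mulVec, hAmul, Matrix.one_mulVec]
  have hyBy_le : y ⬝ᵥ B *ᵥ y ≤ y ⬝ᵥ A *ᵥ y := by
    have h0 := hAB.dotProduct_mulVec_nonneg y
    simp only [star_trivial, Matrix.sub_mulVec, dotProduct_sub] at h0
    linarith
  have hBv : B *ᵥ (B⁻¹ *ᵥ x) = x := by
    rw [Matrix.mulVec_mulVec, hBmul, Matrix.one_mulVec]
  have hvBv : (B⁻¹ *ᵥ x) ⬝ᵥ B *ᵥ (B⁻¹ *ᵥ x) = x ⬝ᵥ B⁻¹ *ᵥ x := by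
    rw [hBv, dotProduct_comm]
  have hcs := psd_cauchy_schwarz hB.posSemidef y (B⁻¹ *ᵥ x)
  rw [hvBv] at hcs
  have hcs2 : (y ⬝ᵥ x) ^ 2 ≤ (y ⬝ᵥ A *ᵥ y) * (x ⬝ᵥ B⁻¹ *ᵥ x) := by
    have h1 : y ⬝ᵥ B *ᵥ (B⁻¹ *ᵥ x) = y ⬝ᵥ x := by rw [hBv]
    rw [h1] at hcs
    have hxB : 0 ≤ x ⬝ᵥ B⁻¹ *ᵥ x := by simpa using hBinv.posSemidef.dotProduct_mulVec_nonneg x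
    nlinarith
  rw [hyAy] at hcs2
  have hxA : 0 ≤ x ⬝ᵥ A⁻¹ *ᵥ x := by simpa using hAinv.posSemidef.dotProduct_mulVec_nonneg x
  have hxB : 0 ≤ x ⬝ᵥ B⁻¹ *ᵥ x := by simpa using hBinv.posSemidef.dotProduct_mulVec_nonneg x
  have hstep1 : x ⬝ᵥ A⁻¹ *ᵥ x ≤ x ⬝ᵥ B⁻¹ *ᵥ x := by
    rcases eq_or_lt_of_le hxA with h | h
    · linarith
    · rw [← hyx] at h ⊢
      nlinarith
  -- Step 2: 1 ≤ det B⁻¹ / det A⁻¹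
  have hdetAB : B.det ≤ A.det := det_mono_of_sub_posSemidef hB hAB
  have hratio : 1 ≤ B⁻¹.det / A⁻¹.det := by
    rw [Matrix.det_nonsing_inv, Matrix.det_nonsing_inv, Ring.inverse_eq_inv']
    have heq : B.det⁻¹ / A.det⁻¹ = A.det / B.det := by
      field_simp
    rw [heq, le_div_iff₀ hBdet, one_mul]
    exact hdetAB
  calc Real.sqrt (x ⬝ᵥ A⁻¹ *ᵥ x) ≤ Real.sqrt (x ⬝ᵥ B⁻¹ *ᵥ x) :=
        Real.sqrt_le_sqrt hstep1
    _ = Real.sqrt (x ⬝ᵥ B⁻¹ *ᵥ x) * 1 := (mul_one _).symm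
    _ ≤ Real.sqrt (x ⬝ᵥ B⁻¹ *ᵥ x) * Real.sqrt (B⁻¹.det / A⁻¹.det) := by
        refine mul_le_mul_of_nonneg_left ?_ (Real.sqrt_nonneg _)
        rw [show (1 : ℝ) = Real.sqrt 1 from (Real.sqrt_one).symm]
        exact Real.sqrt_le_sqrt hratio
end

section
/- Let V̂_0 = λ I_d and V̂_k = V̂_{k-1} + φ_k φ_kᵀ for vectors φ_k ∈ ℝ^d with ‖φ_k‖₂ ≤ 1, and λ > 0. Fix a batch size B dividing T, let M = T/B, and for each t let m_t = B·⌊(t-1)/B⌋ be the start of the batch containing t. Define Ψ = { t ∈ [T] : ‖φ_t‖_{V̂_{m_t}^{-1}} > 2 ‖φ_t‖_{V̂_{t-1}^{-1}} }. Then |Ψ| ≤ (dB)/(2 log 2) · log(1 + T/(dλ)). -/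
open Matrix Finset

namespace BBR

variable {d : ℕ}

lemma dot_mulVec_symm {M : Matrix (Fin d) (Fin d) ℝ} (hM : M.IsHermitian)
    (x y : Fin d → ℝ) : x ⬝ᵥ M *ᵥ y = (M *ᵥ x) ⬝ᵥ y := by
  rw [dotProduct_mulVec, ← mulVec_transpose, ← conjTranspose_eq_transpose_of_trivial, hM.eq]

lemma quad_nonneg {M : Matrix (Fin d) (Fin d) ℝ} (hM : M.PosSemidef) (x : Fin d → ℝ) :
    0 ≤ x ⬝ᵥ M *ᵥ x := by
  simpa using hM.dotProduct_mulVec_nonneg x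

lemma quad_pos {M : Matrix (Fin d) (Fin d) ℝ} (hM : M.PosDef) {x : Fin d → ℝ} (hx : x ≠ 0) :
    0 < x ⬝ᵥ M *ᵥ x := by
  simpa using hM.dotProduct_mulVec_pos hx

lemma vecMulVec_mulVec' (v x : Fin d → ℝ) : vecMulVec v v *ᵥ x = (v ⬝ᵥ x) • v := by
  funext i
  simp only [mulVec, vecMulVec_apply, dotProduct, Pi.smul_apply, smul_eq_mul]
  rw [Finset.sum_mul]
  apply Finset.sum_congr rfl
  intro j _
  ring

lemma posSemidef_vecMulVec (v : Fin d → ℝ) : (vecMulVec v v).PosSemidef := by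
  refine Matrix.PosSemidef.of_dotProduct_mulVec_nonneg ?_ ?_
  · ext i j
    simp [vecMulVec_apply, mul_comm]
  · intro x
    rw [vecMulVec_mulVec']
    simp only [star_trivial, dotProduct_smul, smul_eq_mul]
    rw [dotProduct_comm]
    exact mul_self_nonneg _

lemma psd_sum (s : Finset ℕ) (f : ℕ → Matrix (Fin d) (Fin d) ℝ)
    (h : ∀ i ∈ s, (f i).PosSemidef) : (∑ i ∈ s, f i).PosSemidef := by
  classical
  induction s using Finset.induction_on with
  | empty => simpa using Matrix.PosSemidef.zero
  | insert a s hni ih =>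
    rw [Finset.sum_insert hni]
    exact ((h _ (Finset.mem_insert_self _ _)).add
      (ih fun i hi => h i (Finset.mem_insert_of_mem hi)))

lemma one_le_prod_real {f : Fin d → ℝ} (h : ∀ i, 1 ≤ f i) : 1 ≤ ∏ i, f i := by
  calc (1:ℝ) = ∏ _i : Fin d, 1 := by simp
  _ ≤ ∏ i, f i := Finset.prod_le_prod (fun i _ => zero_le_one) (fun i _ => h i)

lemma core {P : Matrix (Fin d) (Fin d) ℝ} (hP : P.PosDef) (hP1 : (P - 1).PosSemidef) :
    1 ≤ P.det ∧ ∀ y : Fin d → ℝ, y ⬝ᵥ y ≤ P.det * (y ⬝ᵥ P⁻¹ *ᵥ y) := by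
  have hPh : P.IsHermitian := hP.isHermitian
  set μ : Fin d → ℝ := hPh.eigenvalues with hμ
  have hμpos : ∀ i, 0 < μ i := hP.eigenvalues_pos
  set U : Matrix (Fin d) (Fin d) ℝ := (hPh.eigenvectorUnitary : Matrix (Fin d) (Fin d) ℝ)
    with hUdef
  have hUU : U * star U = 1 := (Matrix.mem_unitaryGroup_iff).mp hPh.eigenvectorUnitary.2
  have hUU' : star U * U = 1 := (Matrix.mem_unitaryGroup_iff').mp hPh.eigenvectorUnitary.2
  have hspec : P = U * diagonal μ * star U := by
    have h := hPh.spectral_theorem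
    rwa [RCLike.ofReal_real_eq_id, Function.id_comp] at h
  have key : ∀ A B : Matrix (Fin d) (Fin d) ℝ,
      (U * A * star U) * (U * B * star U) = U * (A * B) * star U := by
    intro A B
    simp only [Matrix.mul_assoc]
    rw [← Matrix.mul_assoc (star U) U, hUU', Matrix.one_mul]
  have key2 : ∀ A : Matrix (Fin d) (Fin d) ℝ, star U * (U * A * star U) * U = A := by
    intro A
    simp only [Matrix.mul_assoc]
    rw [hUU', Matrix.mul_one, ← Matrix.mul_assoc, hUU', Matrix.one_mul]
  have hsand : star U * P * U = diagonal μ := by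
    rw [hspec]; exact key2 _
  have hμ1 : ∀ i, 1 ≤ μ i := by
    have hdiagpsd : (diagonal (fun i => μ i - 1)).PosSemidef := by
      have h := hP1.conjTranspose_mul_mul_same U
      have he : Uᴴ * (P - 1) * U = diagonal (fun i => μ i - 1) := by
        rw [← Matrix.star_eq_conjTranspose, Matrix.mul_sub, Matrix.mul_one, Matrix.sub_mul,
          hsand, hUU']
        ext i j
        by_cases hij : i = j <;> simp [diagonal, hij]
      rwa [he] at h
    intro i
    have := posSemidef_diagonal_iff.mp hdiagpsd i
    linarith
  have hdet : P.det = ∏ i, μ i := by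
    simpa using hPh.det_eq_prod_eigenvalues
  have hdet1 : 1 ≤ P.det := by
    rw [hdet]; exact one_le_prod_real hμ1
  have hμdet : ∀ i, μ i ≤ P.det := by
    intro i
    rw [hdet, ← Finset.mul_prod_erase _ _ (Finset.mem_univ i)]
    nth_rewrite 1 [← mul_one (μ i)]
    refine mul_le_mul_of_nonneg_left ?_ (hμpos i).le
    calc (1:ℝ) = ∏ _j ∈ Finset.univ.erase i, 1 := by simp
    _ ≤ ∏ j ∈ Finset.univ.erase i, μ j :=
        Finset.prod_le_prod (fun j _ => zero_le_one) (fun j _ => hμ1 j)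
  have hPinv : P⁻¹ = U * diagonal (fun i => (μ i)⁻¹) * star U := by
    apply Matrix.inv_eq_left_inv
    rw [hspec, key, diagonal_mul_diagonal]
    rw [show (fun i => (μ i)⁻¹ * μ i) = fun _ => (1:ℝ) from
      funext fun i => inv_mul_cancel₀ (hμpos i).ne']
    rw [diagonal_one, Matrix.mul_one, hUU]
  have hQpsd : (P.det • P⁻¹ - 1).PosSemidef := by
    have hd : diagonal (fun i => P.det * (μ i)⁻¹ - 1)
        = P.det • diagonal (fun i => (μ i)⁻¹) - 1 := by
      rw [← Matrix.diagonal_smul, ← Matrix.diagonal_one, ← Matrix.diagonal_sub]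
      congr 1
    have hQeq : U * diagonal (fun i => P.det * (μ i)⁻¹ - 1) * star U = P.det • P⁻¹ - 1 := by
      rw [hd, Matrix.mul_sub, Matrix.mul_one, Matrix.sub_mul, hUU, Matrix.mul_smul,
        Matrix.smul_mul, ← hPinv]
    rw [← hQeq]
    have hdiag : (diagonal (fun i => P.det * (μ i)⁻¹ - 1)).PosSemidef := by
      refine posSemidef_diagonal_iff.mpr fun i => ?_
      have := hμdet i
      rw [sub_nonneg, ← div_eq_mul_inv, le_div_iff₀ (hμpos i), one_mul]
      exact this
    simpa [Matrix.star_eq_conjTranspose] using hdiag.mul_mul_conjTranspose_same U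
  refine ⟨hdet1, fun y => ?_⟩
  have h0 := hQpsd.dotProduct_mulVec_nonneg y
  simp only [star_trivial, sub_mulVec, smul_mulVec, one_mulVec, dotProduct_sub,
    dotProduct_smul, smul_eq_mul] at h0
  linarith

open scoped MatrixOrder in
lemma ratio {A Bm : Matrix (Fin d) (Fin d) ℝ} (hB : Bm.PosDef) (hAB : (A - Bm).PosSemidef) :
    Bm.det ≤ A.det ∧
      ∀ x : Fin d → ℝ, x ⬝ᵥ Bm⁻¹ *ᵥ x ≤ (A.det / Bm.det) * (x ⬝ᵥ A⁻¹ *ᵥ x) := by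
  have hA : A.PosDef := by
    have h := hB.add_posSemidef hAB
    rwa [add_sub_cancel] at h
  set S : Matrix (Fin d) (Fin d) ℝ := CFC.sqrt Bm with hSdef
  have hS : S.PosSemidef := (CFC.sqrt_nonneg Bm).posSemidef
  have hSS : S * S = Bm := CFC.sqrt_mul_sqrt_self Bm hB.posSemidef.nonneg
  have hSdet : S.det * S.det = Bm.det := by rw [← det_mul, hSS]
  have hSunit : IsUnit S.det := by
    refine isUnit_iff_ne_zero.mpr fun h => ?_
    have := hB.det_pos
    rw [← hSdet, h, mul_zero] at this
    exact lt_irrefl _ this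
  set T : Matrix (Fin d) (Fin d) ℝ := S⁻¹ with hTdef
  have hT_herm : T.IsHermitian := hS.1.inv
  have hTS : T * S = 1 := nonsing_inv_mul _ hSunit
  have hST : S * T = 1 := mul_nonsing_inv _ hSunit
  set P : Matrix (Fin d) (Fin d) ℝ := T * A * T with hPdef
  have hTBmT : T * Bm * T = 1 := by
    rw [← hSS, ← Matrix.mul_assoc, Matrix.mul_assoc (T * S), hST, Matrix.mul_one, hTS]
  have hP1 : (P - 1).PosSemidef := by
    have he : P - 1 = Tᴴ * (A - Bm) * T := by
      rw [hT_herm.eq, Matrix.mul_sub, Matrix.sub_mul, hTBmT, hPdef]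
    rw [he]
    exact hAB.conjTranspose_mul_mul_same T
  have hPd : P.PosDef := by
    have h := Matrix.PosDef.one.add_posSemidef hP1
    rwa [show (1 : Matrix (Fin d) (Fin d) ℝ) + (P - 1) = P by abel] at h
  obtain ⟨hdet1, hquad⟩ := core hPd hP1
  have hPdet : P.det = A.det / Bm.det := by
    have hTdet : T.det = (S.det)⁻¹ := by rw [hTdef, det_nonsing_inv, Ring.inverse_eq_inv']
    rw [hPdef, det_mul, det_mul, hTdet, ← hSdet]
    have h0 : S.det ≠ 0 := hSunit.ne_zero
    field_simp
  constructor
  · rw [hPdet, le_div_iff₀ hB.det_pos, one_mul] at hdet1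
    exact hdet1
  · intro x
    have hA_eq : S * P * S = A := by
      rw [hPdef]
      simp only [Matrix.mul_assoc]
      rw [hTS, Matrix.mul_one, ← Matrix.mul_assoc, hST, Matrix.one_mul]
    have hAinv : A⁻¹ = T * P⁻¹ * T := by
      rw [← hA_eq, Matrix.mul_inv_rev, Matrix.mul_inv_rev]
      simp only [hTdef, Matrix.mul_assoc]
    have hBinv : Bm⁻¹ = T * T := by rw [← hSS, Matrix.mul_inv_rev]
    have hy1 : x ⬝ᵥ Bm⁻¹ *ᵥ x = (T *ᵥ x) ⬝ᵥ (T *ᵥ x) := by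
      rw [hBinv, ← Matrix.mulVec_mulVec, dot_mulVec_symm hT_herm]
    have hy2 : x ⬝ᵥ A⁻¹ *ᵥ x = (T *ᵥ x) ⬝ᵥ P⁻¹ *ᵥ (T *ᵥ x) := by
      rw [hAinv, ← Matrix.mulVec_mulVec, ← Matrix.mulVec_mulVec, dot_mulVec_symm hT_herm]
    rw [hy1, hy2, ← hPdet]
    exact (hquad (T *ᵥ x))

end BBR

open BBR

theorem batch_bad_rounds_bound {d : ℕ} (T B : ℕ) (hB : 0 < B) (hBT : B ∣ T)
    (lam : ℝ) (hlam : 0 < lam) (φ : ℕ → Fin d → ℝ)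
    (hφ : ∀ t, Real.sqrt (φ t ⬝ᵥ φ t) ≤ 1)
    (V : ℕ → Matrix (Fin d) (Fin d) ℝ)
    (hV : ∀ k, V k = lam • (1 : Matrix (Fin d) (Fin d) ℝ)
        + ∑ j ∈ Finset.Icc 1 k, vecMulVec (φ j) (φ j))
    (mt : ℕ → ℕ) (hmt : ∀ t, mt t = B * ((t - 1) / B)) :
    (({t : ℕ | t ∈ Finset.Icc 1 T ∧
        Real.sqrt (φ t ⬝ᵥ (V (mt t))⁻¹ *ᵥ φ t) >
          2 * Real.sqrt (φ t ⬝ᵥ (V (t - 1))⁻¹ *ᵥ φ t)}).ncard : ℝ)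
      ≤ (d * B) / (2 * Real.log 2) * Real.log (1 + (T : ℝ) / (d * lam)) := by
  classical
  rcases Nat.eq_zero_or_pos d with hd | hd
  · subst hd
    have hempty : {t : ℕ | t ∈ Finset.Icc 1 T ∧
        Real.sqrt (φ t ⬝ᵥ (V (mt t))⁻¹ *ᵥ φ t) >
          2 * Real.sqrt (φ t ⬝ᵥ (V (t - 1))⁻¹ *ᵥ φ t)} = ∅ := by
      ext t
      simp [dotProduct]
    rw [hempty]
    simp
  -- main case
  have hVpd : ∀ k, (V k).PosDef := by
    intro k
    rw [hV k]
    refine Matrix.PosDef.add_posSemidef ?_ (psd_sum _ _ fun j _ => posSemidef_vecMulVec _)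
    rw [smul_one_eq_diagonal]
    exact posDef_diagonal_iff.mpr fun _ => hlam
  have hmono : ∀ {k l : ℕ}, k ≤ l → (V l - V k).PosSemidef := by
    intro k l hkl
    have hsub : Finset.Icc 1 k ⊆ Finset.Icc 1 l := Finset.Icc_subset_Icc le_rfl hkl
    have he : V l - V k = ∑ j ∈ Finset.Icc 1 l \ Finset.Icc 1 k, vecMulVec (φ j) (φ j) := by
      rw [hV l, hV k, add_sub_add_left_eq_sub, ← Finset.sum_sdiff hsub, add_sub_cancel_right]
    rw [he]
    exact psd_sum _ _ fun j _ => posSemidef_vecMulVec _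
  set pred : ℕ → Prop := fun t =>
    Real.sqrt (φ t ⬝ᵥ (V (mt t))⁻¹ *ᵥ φ t) > 2 * Real.sqrt (φ t ⬝ᵥ (V (t - 1))⁻¹ *ᵥ φ t)
    with hpred
  set Ψ : Finset ℕ := (Finset.Icc 1 T).filter pred with hΨ
  have hset : {t : ℕ | t ∈ Finset.Icc 1 T ∧ pred t} = ↑Ψ := by
    ext t
    simp [hΨ, Finset.mem_filter]
  rw [hset, Set.ncard_coe_finset]
  set M : ℕ := T / B with hM
  have hBM : B * M = T := Nat.mul_div_cancel' hBT
  set S : Finset ℕ := (Finset.range M).filter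
    (fun i => 4 * (V (B * i)).det < (V (B * i + B)).det) with hS
  -- each bad t has its batch in S
  have hf : ∀ t ∈ Ψ, (t - 1) / B ∈ S := by
    intro t ht
    rw [hΨ, Finset.mem_filter, Finset.mem_Icc] at ht
    obtain ⟨⟨ht1, htT⟩, hp⟩ := ht
    set i : ℕ := (t - 1) / B with hi
    have hiM : i < M := by
      rw [hi]
      rw [Nat.div_lt_iff_lt_mul hB]
      calc t - 1 < t := Nat.sub_lt (lt_of_lt_of_le Nat.zero_lt_one ht1) Nat.zero_lt_one
      _ ≤ M * B := by rw [mul_comm, hBM]; exact htT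
    have hmt_eq : mt t = B * i := by rw [hmt t, hi]
    have hm_le : B * i ≤ t - 1 := by
      rw [hi]
      exact Nat.mul_div_le (t - 1) B
    have ht_le : t - 1 ≤ B * i + B := by
      have h1 : B * ((t-1)/B) + (t-1) % B = t - 1 := Nat.div_add_mod (t-1) B
      have h2 : (t-1) % B < B := Nat.mod_lt _ hB
      have h3 : B * i = B * ((t-1)/B) := by rw [hi]
      omega
    -- quadratic form facts
    have hbpos0 : 0 ≤ φ t ⬝ᵥ (V (t-1))⁻¹ *ᵥ φ t :=
      quad_nonneg (hVpd (t-1)).inv.posSemidef _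
    have hapos0 : 0 ≤ φ t ⬝ᵥ (V (mt t))⁻¹ *ᵥ φ t :=
      quad_nonneg (hVpd (mt t)).inv.posSemidef _
    have hsqrt_pos : 0 < Real.sqrt (φ t ⬝ᵥ (V (mt t))⁻¹ *ᵥ φ t) :=
      lt_of_le_of_lt (by positivity) hp
    have hapos : 0 < φ t ⬝ᵥ (V (mt t))⁻¹ *ᵥ φ t := Real.sqrt_pos.mp hsqrt_pos
    have hφt : φ t ≠ 0 := by
      intro h0
      rw [h0] at hapos
      simp at hapos
    have hbpos : 0 < φ t ⬝ᵥ (V (t-1))⁻¹ *ᵥ φ t := quad_pos (hVpd (t-1)).inv hφt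
    have ha4b : 4 * (φ t ⬝ᵥ (V (t-1))⁻¹ *ᵥ φ t) < φ t ⬝ᵥ (V (mt t))⁻¹ *ᵥ φ t := by
      have hsq := pow_lt_pow_left₀ hp (by positivity) (two_ne_zero)
      rw [mul_pow, Real.sq_sqrt hbpos0, Real.sq_sqrt hapos0] at hsq
      nlinarith [hsq]
    have hratio := (ratio (hVpd (mt t)) (hmono (hmt_eq ▸ hm_le))).2 (φ t)
    have hdet_lt : 4 * (V (mt t)).det < (V (t-1)).det := by
      have hdm := (hVpd (mt t)).det_pos
      have h4r : 4 < (V (t-1)).det / (V (mt t)).det := by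
        have h1 : 4 * (φ t ⬝ᵥ (V (t-1))⁻¹ *ᵥ φ t)
            < ((V (t-1)).det / (V (mt t)).det) * (φ t ⬝ᵥ (V (t-1))⁻¹ *ᵥ φ t) :=
          lt_of_lt_of_le ha4b hratio
        exact (mul_lt_mul_iff_left₀ hbpos).mp h1
      rw [lt_div_iff₀ hdm] at h4r
      linarith
    have hdet_mono := (ratio (hVpd (t-1)) (hmono ht_le)).1
    rw [hS, Finset.mem_filter, Finset.mem_range]
    refine ⟨hiM, ?_⟩
    calc 4 * (V (B * i)).det = 4 * (V (mt t)).det := by rw [hmt_eq]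
    _ < (V (t-1)).det := hdet_lt
    _ ≤ (V (B * i + B)).det := hdet_mono
  -- |Ψ| ≤ B * |S|
  have hcount : Ψ.card ≤ B * S.card := by
    rw [Finset.card_eq_sum_card_fiberwise hf]
    have hfib : ∀ i ∈ S, (Ψ.filter (fun t => (t-1)/B = i)).card ≤ B := by
      intro i _
      have hsub : Ψ.filter (fun t => (t-1)/B = i) ⊆ Finset.Icc (B*i+1) (B*i+B) := by
        intro t ht
        rw [Finset.mem_filter] at ht
        obtain ⟨htΨ, hti⟩ := ht
        rw [hΨ, Finset.mem_filter, Finset.mem_Icc] at htΨ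
        obtain ⟨⟨ht1, _⟩, _⟩ := htΨ
        have h1 : B * ((t-1)/B) + (t-1) % B = t - 1 := Nat.div_add_mod (t-1) B
        have h2 : (t-1) % B < B := Nat.mod_lt _ hB
        have h3 : B * ((t-1)/B) = B * i := by rw [hti]
        rw [Finset.mem_Icc]
        omega
      calc (Ψ.filter (fun t => (t-1)/B = i)).card
          ≤ (Finset.Icc (B*i+1) (B*i+B)).card := Finset.card_le_card hsub
      _ = B := by rw [Nat.card_Icc]; omega
    calc ∑ i ∈ S, (Ψ.filter (fun t => (t-1)/B = i)).card ≤ ∑ _i ∈ S, B :=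
        Finset.sum_le_sum hfib
    _ = S.card * B := by rw [Finset.sum_const, smul_eq_mul]
    _ = B * S.card := Nat.mul_comm _ _
  -- potential argument
  have hdetmono : ∀ {k l : ℕ}, k ≤ l → (V k).det ≤ (V l).det := fun h =>
    (ratio (hVpd _) (hmono h)).1
  have hpot : ∀ n, n ≤ M → lam ^ d * 4 ^ ((S.filter (· < n)).card) ≤ (V (B*n)).det := by
    intro n
    induction n with
    | zero =>
      intro _
      have he : (S.filter (· < 0)) = ∅ := by ext a; simp
      rw [he]
      simp only [Finset.card_empty, pow_zero, mul_one, Nat.mul_zero]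
      have hV0 : V 0 = lam • (1 : Matrix (Fin d) (Fin d) ℝ) := by
        rw [hV 0]; simp
      rw [hV0, Matrix.det_smul, Matrix.det_one, mul_one, Fintype.card_fin]
    | succ n ih =>
      intro hn1
      have hn : n ≤ M := Nat.le_of_succ_le hn1
      have hih := ih hn
      have hBsucc : B * (n+1) = B*n + B := by ring
      by_cases hnS : n ∈ S
      · have hcard : (S.filter (· < n+1)).card = (S.filter (· < n)).card + 1 := by
          have he : S.filter (· < n+1) = insert n (S.filter (· < n)) := by
            ext a
            simp only [Finset.mem_filter, Finset.mem_insert]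
            constructor
            · rintro ⟨haS, halt⟩
              rcases Nat.lt_succ_iff_lt_or_eq.mp halt with h | h
              · exact Or.inr ⟨haS, h⟩
              · exact Or.inl h
            · rintro (rfl | ⟨haS, h⟩)
              · exact ⟨hnS, Nat.lt_succ_self _⟩
              · exact ⟨haS, Nat.lt_succ_of_lt h⟩
          rw [he, Finset.card_insert_of_notMem (by simp)]
        have hdlt : 4 * (V (B*n)).det < (V (B*n+B)).det := by
          rw [hS, Finset.mem_filter] at hnS
          exact hnS.2
        rw [hcard, pow_succ, hBsucc]
        have hlp : 0 < lam ^ d := pow_pos hlam d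
        have h4p : (0:ℝ) < 4 ^ ((S.filter (· < n)).card) := by positivity
        nlinarith [hih, hdlt, h4p, hlp]
      · have hcard : (S.filter (· < n+1)) = (S.filter (· < n)) := by
          ext a
          simp only [Finset.mem_filter]
          constructor
          · rintro ⟨haS, halt⟩
            rcases Nat.lt_succ_iff_lt_or_eq.mp halt with h | h
            · exact ⟨haS, h⟩
            · exact absurd (h ▸ haS) hnS
          · rintro ⟨haS, h⟩
            exact ⟨haS, Nat.lt_succ_of_lt h⟩
        rw [hcard, hBsucc]
        exact le_trans hih (hdetmono (Nat.le_add_right _ _))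
  have hSfull : S.filter (· < M) = S := by
    ext a
    simp only [Finset.mem_filter, and_iff_left_iff_imp]
    intro ha
    rw [hS, Finset.mem_filter, Finset.mem_range] at ha
    exact ha.1
  have hpotT : lam ^ d * 4 ^ S.card ≤ (V T).det := by
    have h := hpot M le_rfl
    rwa [hSfull, hBM] at h
  -- trace bound
  have hdpos : (0:ℝ) < d := by exact_mod_cast hd
  have htrace : (V T).trace ≤ d * lam + T := by
    rw [hV T, Matrix.trace_add, Matrix.trace_smul, Matrix.trace_one, Matrix.trace_sum]
    have h2 : ∑ j ∈ Finset.Icc 1 T, (vecMulVec (φ j) (φ j)).trace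
        ≤ ∑ _j ∈ Finset.Icc 1 T, (1:ℝ) := by
      apply Finset.sum_le_sum
      intro j _
      have h1 : (vecMulVec (φ j) (φ j)).trace = φ j ⬝ᵥ φ j := by
        simp [Matrix.trace, Matrix.diag, vecMulVec_apply, dotProduct]
      rw [h1]
      have hnn : 0 ≤ φ j ⬝ᵥ φ j :=
        Finset.sum_nonneg fun i _ => mul_self_nonneg (φ j i)
      calc φ j ⬝ᵥ φ j = Real.sqrt (φ j ⬝ᵥ φ j) ^ 2 := (Real.sq_sqrt hnn).symm
      _ ≤ 1 ^ 2 := pow_le_pow_left₀ (Real.sqrt_nonneg _) (hφ j) 2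
      _ = 1 := one_pow 2
    have h3 : (∑ _j ∈ Finset.Icc 1 T, (1:ℝ)) = T := by
      rw [Finset.sum_const, Nat.card_Icc]
      simp
    rw [h3] at h2
    have h4 : lam • ((Fintype.card (Fin d) : ℝ)) = d * lam := by
      rw [Fintype.card_fin]
      simp [mul_comm]
    rw [h4]
    linarith
  -- det ≤ (lam + T/d)^d via AM-GM on eigenvalues
  have hdet_le : (V T).det ≤ (lam + (T:ℝ) / d) ^ d := by
    have hh : (V T).IsHermitian := (hVpd T).isHermitian
    have hνpos : ∀ i, 0 < hh.eigenvalues i := (hVpd T).eigenvalues_pos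
    set ν : Fin d → ℝ := hh.eigenvalues with hν
    have hdet : (V T).det = ∏ i, ν i := by simpa using hh.det_eq_prod_eigenvalues
    have htr : (V T).trace = ∑ i, ν i := by
      have hspec := hh.spectral_theorem
      rw [RCLike.ofReal_real_eq_id, Function.id_comp, Unitary.conjStarAlgAut_apply] at hspec
      rw [hspec, Matrix.trace_mul_cycle,
        (Matrix.mem_unitaryGroup_iff').mp hh.eigenvectorUnitary.2, Matrix.one_mul,
        Matrix.trace_diagonal]
    have hgm := Real.geom_mean_le_arith_mean_weighted Finset.univ (fun _ => 1/(d:ℝ)) ν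
      (fun i _ => by positivity)
      (by
        rw [Finset.sum_const, Finset.card_univ, Fintype.card_fin]
        rw [nsmul_eq_mul]; exact mul_one_div_cancel hdpos.ne')
      (fun i _ => (hνpos i).le)
    have hsum : ∑ i, (1/(d:ℝ)) * ν i = (V T).trace / d := by
      rw [htr, ← Finset.mul_sum]
      ring
    have hgm2 : ∏ i, ν i ^ (1/(d:ℝ)) ≤ lam + (T:ℝ)/d := by
      rw [hsum] at hgm
      refine le_trans hgm ?_
      rw [div_le_iff₀ hdpos]
      have : (lam + (T:ℝ)/d) * d = d * lam + T := by field_simp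
      rw [this]
      exact htrace
    have hprod : (∏ i, ν i ^ (1/(d:ℝ)))^(d:ℕ) = ∏ i, ν i := by
      rw [← Finset.prod_pow]
      apply Finset.prod_congr rfl
      intro i _
      rw [← Real.rpow_natCast (ν i ^ (1/(d:ℝ))) d, ← Real.rpow_mul (hνpos i).le]
      rw [one_div, inv_mul_cancel₀ (by positivity : (d:ℝ) ≠ 0), Real.rpow_one]
    rw [hdet, ← hprod]
    refine pow_le_pow_left₀ ?_ hgm2 d
    exact Finset.prod_nonneg fun i _ => Real.rpow_nonneg (hνpos i).le _
  -- combine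
  have hlp : 0 < lam ^ d := pow_pos hlam d
  have hfour : (4:ℝ) ^ S.card ≤ (1 + (T:ℝ)/(d*lam)) ^ d := by
    have h1 : lam ^ d * 4 ^ S.card ≤ (lam + (T:ℝ)/d)^d := le_trans hpotT hdet_le
    have h2 : (lam + (T:ℝ)/d)^d = lam^d * (1 + (T:ℝ)/(d*lam))^d := by
      rw [← mul_pow]
      congr 1
      field_simp
    rw [h2] at h1
    exact le_of_mul_le_mul_left h1 hlp
  have hloggoal : (S.card : ℝ) * (2 * Real.log 2) ≤ d * Real.log (1 + (T:ℝ)/(d*lam)) := by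
    have h0 : (0:ℝ) < 4 ^ S.card := by positivity
    have hlog1 := Real.log_le_log h0 hfour
    rw [Real.log_pow, Real.log_pow] at hlog1
    have h4 : Real.log 4 = 2 * Real.log 2 := by
      rw [show (4:ℝ) = 2^2 by norm_num, Real.log_pow]
      push_cast
      ring
    rw [h4] at hlog1
    exact_mod_cast hlog1
  have h2l : 0 < 2 * Real.log 2 := by
    have := Real.log_pos (by norm_num : (1:ℝ) < 2)
    linarith
  calc (Ψ.card : ℝ) ≤ (B:ℝ) * S.card := by exact_mod_cast hcount
  _ ≤ (B:ℝ) * ((d:ℝ) * Real.log (1 + (T:ℝ)/(d*lam)) / (2*Real.log 2)) := by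
      refine mul_le_mul_of_nonneg_left ?_ (by positivity)
      rw [le_div_iff₀ h2l]
      exact hloggoal
  _ = (d * B) / (2*Real.log 2) * Real.log (1 + (T:ℝ)/(d*lam)) := by ring
end

section
/- Let V̂_k = λ I_d + Σ_{j=1}^k φ_j φ_jᵀ with ‖φ_j‖₂ ≤ 1 and λ ≥ 1. Then Σ_{t=1}^T min{‖φ_t‖²_{V̂_{t-1}^{-1}}, 1} ≤ 2 d log(1 + T/(dλ)). -/
open Matrix

private lemma ep_vecMulVec_posSemidef {d : ℕ} (u : Fin d → ℝ) :
    (vecMulVec u u).PosSemidef := by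
  have h := Matrix.posSemidef_conjTranspose_mul_self (Matrix.replicateRow Unit u)
  rwa [Matrix.conjTranspose_replicateRow, star_trivial, ← Matrix.vecMulVec_eq] at h

private lemma ep_min_le_two_log {u : ℝ} (hu : 0 ≤ u) : min u 1 ≤ 2 * Real.log (1 + u) := by
  have h0 : (0:ℝ) < 1 + u := by linarith
  have hlog : 1 - (1+u)⁻¹ ≤ Real.log (1 + u) := by
    have h := Real.log_le_sub_one_of_pos (x := 1/(1+u)) (by positivity)
    rw [one_div, Real.log_inv] at h
    linarith
  rcases le_total u 1 with h | h
  · rw [min_eq_left h]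
    have hid : (1 - (1+u)⁻¹) * (1+u) = u := by field_simp; ring
    nlinarith
  · rw [min_eq_right h]
    have h2 : Real.log 2 ≤ Real.log (1 + u) := Real.log_le_log (by norm_num) (by linarith)
    nlinarith [Real.log_two_gt_d9]

private lemma ep_trace_eq_sum_eigs {n : Type*} [Fintype n] [DecidableEq n]
    {A : Matrix n n ℝ} (hA : A.IsHermitian) :
    A.trace = ∑ i, hA.eigenvalues i := by
  nth_rewrite 1 [hA.spectral_theorem]
  rw [Unitary.conjStarAlgAut_apply, Matrix.trace_mul_cycle, Unitary.coe_star_mul_self, Matrix.one_mul, Matrix.trace_diagonal]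
  simp [RCLike.ofReal_real_eq_id]

theorem elliptical_potential {d : ℕ} (T : ℕ) (lam : ℝ) (hlam : 1 ≤ lam)
    (φ : ℕ → Fin d → ℝ) (hφ : ∀ t, Real.sqrt (φ t ⬝ᵥ φ t) ≤ 1)
    (V : ℕ → Matrix (Fin d) (Fin d) ℝ)
    (hV : ∀ k, V k = lam • (1 : Matrix (Fin d) (Fin d) ℝ)
        + ∑ j ∈ Finset.Icc 1 k, vecMulVec (φ j) (φ j)) :
    ∑ t ∈ Finset.Icc 1 T, min (φ t ⬝ᵥ (V (t - 1))⁻¹ *ᵥ φ t) 1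
      ≤ 2 * d * Real.log (1 + (T : ℝ) / (d * lam)) := by
  rcases Nat.eq_zero_or_pos d with hd | hd
  · subst hd
    have h1 : ∀ t, (φ t ⬝ᵥ (V (t - 1))⁻¹ *ᵥ φ t) = 0 := by
      intro t; simp [dotProduct]
    have h2 : (1 : ℝ) + (T : ℝ) / ((0:ℕ) * lam) = 1 := by norm_num
    simp [h1, h2]
  have hlam0 : (0:ℝ) < lam := lt_of_lt_of_le one_pos hlam
  have hd0 : (0:ℝ) < (d:ℝ) := by exact_mod_cast hd
  -- positivity of V k
  have hpos : ∀ k, (V k).PosDef := by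
    intro k
    rw [hV k]
    refine Matrix.PosDef.add_posSemidef ?_ ?_
    · have : lam • (1 : Matrix (Fin d) (Fin d) ℝ) = Matrix.diagonal (fun _ => lam) := by
        ext i j
        by_cases h : i = j <;> simp [Matrix.one_apply, h]
      rw [this]
      exact Matrix.PosDef.diagonal (fun _ => hlam0)
    · exact Finset.sum_induction _ _ (fun a b ha hb => ha.add hb) Matrix.PosSemidef.zero
        (fun j _ => ep_vecMulVec_posSemidef (φ j))
  have hdet_pos : ∀ k, 0 < (V k).det := fun k => (hpos k).det_pos
  set q : ℕ → ℝ := fun t => φ t ⬝ᵥ (V (t - 1))⁻¹ *ᵥ φ t with hq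
  have hq_nonneg : ∀ t, 0 ≤ q t := by
    intro t
    have := ((hpos (t-1)).inv).posSemidef.dotProduct_mulVec_nonneg (φ t)
    rwa [star_trivial] at this
  -- determinant recursion
  have hdet_step : ∀ k : ℕ, (V (k+1)).det = (V k).det * (1 + q (k+1)) := by
    intro k
    have hins : Finset.Icc 1 (k+1) = insert (k+1) (Finset.Icc 1 k) := by
      ext x; simp only [Finset.mem_Icc, Finset.mem_insert]; omega
    have hsplit : V (k+1) = V k + Matrix.replicateCol Unit (φ (k+1)) * Matrix.replicateRow Unit (φ (k+1)) := by
      rw [hV (k+1), hV k, ← Matrix.vecMulVec_eq, hins,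
        Finset.sum_insert (by simp), add_comm (vecMulVec (φ (k+1)) (φ (k+1))), ← add_assoc]
    have h11 : (1 + Matrix.replicateRow Unit (φ (k+1)) * (V k)⁻¹ * Matrix.replicateCol Unit (φ (k+1))).det
        = 1 + φ (k+1) ⬝ᵥ (V k)⁻¹ *ᵥ φ (k+1) := by
      rw [Matrix.det_unique, Matrix.add_apply, Matrix.one_apply_eq, ← Matrix.replicateRow_vecMul,
        Matrix.replicateRow_mul_replicateCol_apply, ← Matrix.dotProduct_mulVec]
    rw [hsplit, Matrix.det_add_replicateCol_mul_replicateRow (hdet_pos k).ne'.isUnit, h11]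
    simp [hq]
  -- telescoping
  have htel : Real.log (V T).det
      = Real.log (V 0).det + ∑ t ∈ Finset.Icc 1 T, Real.log (1 + q t) := by
    induction T with
    | zero => simp
    | succ k ih =>
      have hins : Finset.Icc 1 (k+1) = insert (k+1) (Finset.Icc 1 k) := by
        ext x; simp only [Finset.mem_Icc, Finset.mem_insert]; omega
      rw [hins, Finset.sum_insert (by simp), hdet_step k, Real.log_mul (hdet_pos k).ne' (by have := hq_nonneg (k+1); positivity), ih]
      ring
  -- trace bound
  have hφφ : ∀ j, φ j ⬝ᵥ φ j ≤ 1 := by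
    intro j
    have h0 : 0 ≤ φ j ⬝ᵥ φ j := Finset.sum_nonneg fun i _ => mul_self_nonneg _
    nlinarith [Real.sq_sqrt h0, hφ j, Real.sqrt_nonneg (φ j ⬝ᵥ φ j)]
  have htrace : (V T).trace ≤ (d:ℝ) * lam + T := by
    rw [hV T, Matrix.trace_add, Matrix.trace_smul, Matrix.trace_one, Matrix.trace_sum]
    have h1 : ∀ j ∈ Finset.Icc 1 T, (vecMulVec (φ j) (φ j)).trace ≤ 1 := fun j _ => hφφ j
    have h2 := Finset.sum_le_card_nsmul _ _ 1 h1
    simp only [Nat.card_Icc, Nat.add_sub_cancel, nsmul_eq_mul, mul_one] at h2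
    simp only [smul_eq_mul, Fintype.card_fin]
    linarith
  set m : ℝ := lam + (T:ℝ)/d with hm
  have hm_pos : 0 < m := by positivity
  have hH := (hpos T).1
  have heig_pos : ∀ i, 0 < hH.eigenvalues i := fun i => (hpos T).eigenvalues_pos i
  have hsum_eig : ∑ i, hH.eigenvalues i ≤ (d:ℝ) * m := by
    have := ep_trace_eq_sum_eigs hH
    have hdm : (d:ℝ) * m = (d:ℝ) * lam + T := by
      rw [hm]; field_simp
    rw [← this, hdm]
    exact htrace
  have hdet_prod : (V T).det = ∏ i, hH.eigenvalues i := by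
    have h := hH.det_eq_prod_eigenvalues
    simpa [RCLike.ofReal_real_eq_id] using h
  have hlogdet : Real.log (V T).det ≤ (d:ℝ) * Real.log m := by
    set g : ℝ := ∏ i, hH.eigenvalues i ^ ((d:ℝ)⁻¹) with hg
    have hg_pos : 0 < g :=
      Finset.prod_pos fun i _ => Real.rpow_pos_of_pos (heig_pos i) _
    have hgm := Real.geom_mean_le_arith_mean_weighted Finset.univ (fun _ => (d:ℝ)⁻¹)
      hH.eigenvalues (fun i _ => by positivity)
      (by simp [Finset.card_univ]; field_simp) (fun i _ => (heig_pos i).le)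
    have hg_le : g ≤ m := by
      refine hgm.trans ?_
      rw [← Finset.mul_sum]
      calc (d:ℝ)⁻¹ * ∑ i, hH.eigenvalues i ≤ (d:ℝ)⁻¹ * ((d:ℝ) * m) := by
            exact mul_le_mul_of_nonneg_left hsum_eig (by positivity)
        _ = m := by field_simp
    have hlog_g : Real.log g = (d:ℝ)⁻¹ * Real.log (V T).det := by
      rw [hg, Real.log_prod (fun i _ => (Real.rpow_pos_of_pos (heig_pos i) _).ne')]
      have : ∀ i : Fin d, Real.log (hH.eigenvalues i ^ ((d:ℝ)⁻¹))
          = (d:ℝ)⁻¹ * Real.log (hH.eigenvalues i) := fun i => Real.log_rpow (heig_pos i) _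
      rw [Finset.sum_congr rfl (fun i _ => this i), ← Finset.mul_sum, hdet_prod,
        Real.log_prod (fun i _ => (heig_pos i).ne')]
    have hlog_le : Real.log g ≤ Real.log m := Real.log_le_log hg_pos hg_le
    rw [hlog_g] at hlog_le
    calc Real.log (V T).det = (d:ℝ) * ((d:ℝ)⁻¹ * Real.log (V T).det) := by field_simp
      _ ≤ (d:ℝ) * Real.log m := mul_le_mul_of_nonneg_left hlog_le (by positivity)
  have hV0 : (V 0).det = lam ^ d := by
    rw [hV 0]
    have : Finset.Icc 1 0 = (∅ : Finset ℕ) := by simp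
    rw [this]
    simp [Matrix.det_smul, Fintype.card_fin]
  have hV0log : Real.log (V 0).det = (d:ℝ) * Real.log lam := by
    rw [hV0, Real.log_pow]
  have hS : ∑ t ∈ Finset.Icc 1 T, min (q t) 1
      ≤ 2 * (Real.log (V T).det - Real.log (V 0).det) := by
    have h1 : ∑ t ∈ Finset.Icc 1 T, min (q t) 1
        ≤ ∑ t ∈ Finset.Icc 1 T, 2 * Real.log (1 + q t) :=
      Finset.sum_le_sum fun t _ => ep_min_le_two_log (hq_nonneg t)
    rw [← Finset.mul_sum] at h1
    linarith [htel]
  have hfinal_eq : Real.log m - Real.log lam = Real.log (1 + (T:ℝ)/((d:ℝ)*lam)) := by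
    rw [← Real.log_div hm_pos.ne' hlam0.ne']
    congr 1
    rw [hm]
    field_simp
  have hrw : 2*(d:ℝ)*Real.log (1 + (T:ℝ)/((d:ℝ)*lam))
      = 2*((d:ℝ)*Real.log m - (d:ℝ)*Real.log lam) := by
    rw [← hfinal_eq]; ring
  rw [hrw]
  have := mul_le_mul_of_nonneg_left hlogdet (by norm_num : (0:ℝ) ≤ 2)
  linarith
end

section
/- With the notation of the previous statement, if additionally V ⪰ H ≻ 0 and V ⪰ G + λ_min I ≻ 0 where G = Σ_{t=1}^n φ_t φ_tᵀ, then ‖θ* − θ̂‖_V ≤ ‖Σ_{t=1}^n φ_t η_t‖_{(G + λ_min I)^{-1}} + ‖θ*‖_H + ‖h‖_{H^{-1}}. -/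
open Matrix

section Aux

variable {d : ℕ}

lemma aux_dot_self_nonneg (u : Fin d → ℝ) : 0 ≤ u ⬝ᵥ u :=
  Finset.sum_nonneg fun i _ => mul_self_nonneg (u i)

lemma aux_dot_cs (u v : Fin d → ℝ) :
    u ⬝ᵥ v ≤ Real.sqrt (u ⬝ᵥ u) * Real.sqrt (v ⬝ᵥ v) := by
  have h := Finset.sum_mul_sq_le_sq_mul_sq Finset.univ u v
  have h2 : (u ⬝ᵥ v) ^ 2 ≤ (u ⬝ᵥ u) * (v ⬝ᵥ v) := by
    simpa [dotProduct, sq] using h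
  calc u ⬝ᵥ v ≤ |u ⬝ᵥ v| := le_abs_self _
    _ = Real.sqrt ((u ⬝ᵥ v) ^ 2) := (Real.sqrt_sq_eq_abs _).symm
    _ ≤ Real.sqrt ((u ⬝ᵥ u) * (v ⬝ᵥ v)) := Real.sqrt_le_sqrt h2
    _ = Real.sqrt (u ⬝ᵥ u) * Real.sqrt (v ⬝ᵥ v) := Real.sqrt_mul (aux_dot_self_nonneg u) _

lemma aux_symm_dot {M : Matrix (Fin d) (Fin d) ℝ} (hM : M.IsHermitian)
    (x y : Fin d → ℝ) : x ⬝ᵥ M *ᵥ y = y ⬝ᵥ M *ᵥ x := by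
  have hMs : Mᵀ = M := by
    have := hM; rwa [IsHermitian, conjTranspose_eq_transpose_of_trivial] at this
  rw [dotProduct_mulVec, ← mulVec_transpose, hMs, dotProduct_comm]

lemma aux_psd_dot (hd : True) {M : Matrix (Fin d) (Fin d) ℝ} (hM : M.PosSemidef)
    (x : Fin d → ℝ) : 0 ≤ x ⬝ᵥ M *ᵥ x := by
  have := hM.dotProduct_mulVec_nonneg x
  simpa using this

open scoped MatrixOrder in
noncomputable def Matrix.PosSemidef.sqrt {M : Matrix (Fin d) (Fin d) ℝ} (_ : M.PosSemidef) :
    Matrix (Fin d) (Fin d) ℝ := CFC.sqrt M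

open scoped MatrixOrder in
lemma Matrix.PosSemidef.sqrt_mul_self {M : Matrix (Fin d) (Fin d) ℝ} (hM : M.PosSemidef) :
    hM.sqrt * hM.sqrt = M := CFC.sqrt_mul_sqrt_self M hM.nonneg

open scoped MatrixOrder in
lemma Matrix.PosSemidef.posSemidef_sqrt {M : Matrix (Fin d) (Fin d) ℝ} (hM : M.PosSemidef) :
    hM.sqrt.PosSemidef := (CFC.sqrt_nonneg M).posSemidef

lemma aux_sqrt_dot {M : Matrix (Fin d) (Fin d) ℝ} (hM : M.PosSemidef)
    (x y : Fin d → ℝ) : x ⬝ᵥ M *ᵥ y = (hM.sqrt *ᵥ x) ⬝ᵥ (hM.sqrt *ᵥ y) := by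
  have hs : hM.sqrt * hM.sqrt = M := hM.sqrt_mul_self
  have hsym : (hM.sqrt)ᵀ = hM.sqrt := by
    have := hM.posSemidef_sqrt.isHermitian
    rwa [IsHermitian, conjTranspose_eq_transpose_of_trivial] at this
  have hMy : M *ᵥ y = hM.sqrt *ᵥ (hM.sqrt *ᵥ y) := by rw [mulVec_mulVec, hs]
  rw [hMy, dotProduct_mulVec, ← mulVec_transpose, hsym]

lemma aux_triangle {M : Matrix (Fin d) (Fin d) ℝ} (hM : M.PosSemidef)
    (a b : Fin d → ℝ) :
    Real.sqrt ((a + b) ⬝ᵥ M *ᵥ (a + b)) ≤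
      Real.sqrt (a ⬝ᵥ M *ᵥ a) + Real.sqrt (b ⬝ᵥ M *ᵥ b) := by
  set u := hM.sqrt *ᵥ a with hu
  set v := hM.sqrt *ᵥ b with hv
  have key : (a + b) ⬝ᵥ M *ᵥ (a + b) = (u + v) ⬝ᵥ (u + v) := by
    rw [aux_sqrt_dot hM, mulVec_add]
  have ha : a ⬝ᵥ M *ᵥ a = u ⬝ᵥ u := aux_sqrt_dot hM a a
  have hb : b ⬝ᵥ M *ᵥ b = v ⬝ᵥ v := aux_sqrt_dot hM b b
  rw [key, ha, hb]
  have expand : (u + v) ⬝ᵥ (u + v) = u ⬝ᵥ u + 2 * (u ⬝ᵥ v) + v ⬝ᵥ v := by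
    rw [add_dotProduct, dotProduct_add, dotProduct_add, dotProduct_comm v u]; ring
  have cs := aux_dot_cs u v
  have h1 : 0 ≤ u ⬝ᵥ u := aux_dot_self_nonneg u
  have h2 : 0 ≤ v ⬝ᵥ v := aux_dot_self_nonneg v
  have s1 := Real.sq_sqrt h1
  have s2 := Real.sq_sqrt h2
  have n1 := Real.sqrt_nonneg (u ⬝ᵥ u)
  have n2 := Real.sqrt_nonneg (v ⬝ᵥ v)
  have hle : (u + v) ⬝ᵥ (u + v) ≤ (Real.sqrt (u ⬝ᵥ u) + Real.sqrt (v ⬝ᵥ v)) ^ 2 := by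
    rw [expand]; nlinarith
  calc Real.sqrt ((u + v) ⬝ᵥ (u + v)) ≤
      Real.sqrt ((Real.sqrt (u ⬝ᵥ u) + Real.sqrt (v ⬝ᵥ v)) ^ 2) := Real.sqrt_le_sqrt hle
    _ = Real.sqrt (u ⬝ᵥ u) + Real.sqrt (v ⬝ᵥ v) := Real.sqrt_sq (by positivity)

/-- Monotonicity of quadratic forms under matrix inversion: if `A ⪰ B ≻ 0` then
`xᵀ A⁻¹ x ≤ xᵀ B⁻¹ x`. -/
lemma aux_inv_mono {A B : Matrix (Fin d) (Fin d) ℝ} (hB : B.PosDef)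
    (hAB : (A - B).PosSemidef) (x : Fin d → ℝ) :
    x ⬝ᵥ A⁻¹ *ᵥ x ≤ x ⬝ᵥ B⁻¹ *ᵥ x := by
  have hA : A.PosDef := by
    have := hB.add_posSemidef hAB
    rwa [add_sub_cancel] at this
  have hAinv : A * A⁻¹ = 1 := mul_nonsing_inv A (isUnit_iff_isUnit_det A |>.1 hA.isUnit)
  have hBinv : B * B⁻¹ = 1 := mul_nonsing_inv B (isUnit_iff_isUnit_det B |>.1 hB.isUnit)
  set y := A⁻¹ *ᵥ x with hy
  set z := y - B⁻¹ *ᵥ x with hz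
  have hAy : A *ᵥ y = x := by rw [hy, mulVec_mulVec, hAinv, one_mulVec]
  have hBBx : B *ᵥ (B⁻¹ *ᵥ x) = x := by rw [mulVec_mulVec, hBinv, one_mulVec]
  -- x ⬝ᵥ A⁻¹ x = y ⬝ᵥ A y
  have exy : x ⬝ᵥ y = y ⬝ᵥ A *ᵥ y := by
    rw [dotProduct_comm]
    conv_lhs => rw [← hAy]
  have e1 : x ⬝ᵥ A⁻¹ *ᵥ x = y ⬝ᵥ A *ᵥ y := by
    rw [← hy, exy]
  have e2 : 0 ≤ y ⬝ᵥ (A - B) *ᵥ y := aux_psd_dot trivial hAB y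
  have e3 : y ⬝ᵥ (A - B) *ᵥ y = y ⬝ᵥ A *ᵥ y - y ⬝ᵥ B *ᵥ y := by
    rw [sub_mulVec, dotProduct_sub]
  have e4 : 0 ≤ z ⬝ᵥ B *ᵥ z := aux_psd_dot trivial hB.posSemidef z
  have eBy : (B⁻¹ *ᵥ x) ⬝ᵥ B *ᵥ y = x ⬝ᵥ y := by
    rw [aux_symm_dot hB.isHermitian, hBBx, dotProduct_comm]
  have eBx : (B⁻¹ *ᵥ x) ⬝ᵥ B *ᵥ (B⁻¹ *ᵥ x) = x ⬝ᵥ B⁻¹ *ᵥ x := by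
    rw [hBBx, dotProduct_comm]
  have eyx : y ⬝ᵥ B *ᵥ (B⁻¹ *ᵥ x) = x ⬝ᵥ y := by rw [hBBx, dotProduct_comm]
  have e5 : z ⬝ᵥ B *ᵥ z =
      y ⬝ᵥ B *ᵥ y - 2 * (x ⬝ᵥ y) + x ⬝ᵥ B⁻¹ *ᵥ x := by
    rw [hz, sub_dotProduct, mulVec_sub, dotProduct_sub, dotProduct_sub,
      eBy, eBx, eyx]
    ring
  linarith [e1, e2, e3, e4, e5, exy]

end Aux

theorem noisy_lse_confidence {d n : ℕ}
    (φ : Fin n → Fin d → ℝ) (η : Fin n → ℝ) (θstar : Fin d → ℝ) (y : Fin n → ℝ)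
    (hy : ∀ t, y t = φ t ⬝ᵥ θstar + η t)
    (H : Matrix (Fin d) (Fin d) ℝ) (hH : H.PosDef) (h : Fin d → ℝ)
    (G : Matrix (Fin d) (Fin d) ℝ) (hGdef : G = ∑ t, vecMulVec (φ t) (φ t))
    (V : Matrix (Fin d) (Fin d) ℝ) (hVdef : V = G + H)
    (θhat : Fin d → ℝ)
    (hθhat : θhat = V⁻¹ *ᵥ ((∑ t, y t • φ t) + h))
    (lamMin : ℝ) (hlamMin : 0 < lamMin)
    (hVH : (V - H).PosSemidef)
    (hGlam : (G + lamMin • (1 : Matrix (Fin d) (Fin d) ℝ)).PosDef)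
    (hVG : (V - (G + lamMin • (1 : Matrix (Fin d) (Fin d) ℝ))).PosSemidef) :
    Real.sqrt ((θstar - θhat) ⬝ᵥ V *ᵥ (θstar - θhat)) ≤
      Real.sqrt ((∑ t, η t • φ t) ⬝ᵥ
          (G + lamMin • (1 : Matrix (Fin d) (Fin d) ℝ))⁻¹ *ᵥ (∑ t, η t • φ t))
      + Real.sqrt (θstar ⬝ᵥ H *ᵥ θstar)
      + Real.sqrt (h ⬝ᵥ H⁻¹ *ᵥ h) := by
  set L := G + lamMin • (1 : Matrix (Fin d) (Fin d) ℝ) with hL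
  have hV : V.PosDef := by
    have := hGlam.add_posSemidef hVG
    rwa [add_sub_cancel] at this
  have hVinv : V * V⁻¹ = 1 := mul_nonsing_inv V (isUnit_iff_isUnit_det V |>.1 hV.isUnit)
  have hVinv' : V⁻¹ * V = 1 := nonsing_inv_mul V (isUnit_iff_isUnit_det V |>.1 hV.isUnit)
  have hHinv : H⁻¹ * H = 1 := nonsing_inv_mul H (isUnit_iff_isUnit_det H |>.1 hH.isUnit)
  set S := ∑ t, η t • φ t with hS
  set x := θstar - θhat with hx
  -- G θ* = ∑ (φ t ⬝ᵥ θ*) • φ t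
  have hGθ : G *ᵥ θstar = ∑ t, (φ t ⬝ᵥ θstar) • φ t := by
    funext i
    simp only [hGdef, mulVec, dotProduct, Finset.sum_apply, Pi.smul_apply,
      Matrix.sum_apply, vecMulVec_apply, smul_eq_mul, Finset.sum_mul]
    rw [Finset.sum_comm]
    exact Finset.sum_congr rfl fun t _ => Finset.sum_congr rfl fun j _ => by ring
  have hsum : (∑ t, y t • φ t) = G *ᵥ θstar + S := by
    rw [hGθ, hS, ← Finset.sum_add_distrib]
    congr 1; funext t
    rw [hy t, add_smul]
  -- w = V x = H θ* - S - h
  have hw : V *ᵥ x = H *ᵥ θstar - S - h := by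
    rw [hx, mulVec_sub, hθhat, mulVec_mulVec, hVinv, one_mulVec, hsum]
    rw [hVdef, add_mulVec]
    abel
  set w := H *ᵥ θstar - S - h with hwdef
  have hVVx : V⁻¹ *ᵥ (V *ᵥ x) = x := by rw [mulVec_mulVec, hVinv', one_mulVec]
  have hquad : x ⬝ᵥ V *ᵥ x = w ⬝ᵥ V⁻¹ *ᵥ w := by
    rw [← hw]
    conv_rhs => rw [hVVx]
    rw [dotProduct_comm]
  have hVinvPSD : (V⁻¹).PosSemidef := hV.inv.posSemidef
  have hwsplit : w = (H *ᵥ θstar) + (-S + -h) := by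
    rw [hwdef]; abel
  have neg_quad : ∀ (M : Matrix (Fin d) (Fin d) ℝ) (v : Fin d → ℝ),
      (-v) ⬝ᵥ M *ᵥ (-v) = v ⬝ᵥ M *ᵥ v := by
    intro M v; rw [mulVec_neg, dotProduct_neg, neg_dotProduct, neg_neg]
  have tri1 : Real.sqrt (w ⬝ᵥ V⁻¹ *ᵥ w) ≤
      Real.sqrt ((H *ᵥ θstar) ⬝ᵥ V⁻¹ *ᵥ (H *ᵥ θstar)) +
      Real.sqrt ((-S + -h) ⬝ᵥ V⁻¹ *ᵥ (-S + -h)) := by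
    rw [hwsplit]; exact aux_triangle hVinvPSD _ _
  have tri2 : Real.sqrt ((-S + -h) ⬝ᵥ V⁻¹ *ᵥ (-S + -h)) ≤
      Real.sqrt (S ⬝ᵥ V⁻¹ *ᵥ S) + Real.sqrt (h ⬝ᵥ V⁻¹ *ᵥ h) := by
    have := aux_triangle hVinvPSD (-S) (-h)
    rwa [neg_quad, neg_quad] at this
  -- bound each term
  have bS : Real.sqrt (S ⬝ᵥ V⁻¹ *ᵥ S) ≤ Real.sqrt (S ⬝ᵥ L⁻¹ *ᵥ S) :=
    Real.sqrt_le_sqrt (aux_inv_mono hGlam hVG S)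
  have bh : Real.sqrt (h ⬝ᵥ V⁻¹ *ᵥ h) ≤ Real.sqrt (h ⬝ᵥ H⁻¹ *ᵥ h) :=
    Real.sqrt_le_sqrt (aux_inv_mono hH hVH h)
  have bθ : Real.sqrt ((H *ᵥ θstar) ⬝ᵥ V⁻¹ *ᵥ (H *ᵥ θstar)) ≤
      Real.sqrt (θstar ⬝ᵥ H *ᵥ θstar) := by
    have h1 : (H *ᵥ θstar) ⬝ᵥ V⁻¹ *ᵥ (H *ᵥ θstar) ≤
        (H *ᵥ θstar) ⬝ᵥ H⁻¹ *ᵥ (H *ᵥ θstar) := aux_inv_mono hH hVH _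
    have h2 : (H *ᵥ θstar) ⬝ᵥ H⁻¹ *ᵥ (H *ᵥ θstar) = θstar ⬝ᵥ H *ᵥ θstar := by
      rw [mulVec_mulVec, hHinv, one_mulVec, dotProduct_comm]
    calc Real.sqrt ((H *ᵥ θstar) ⬝ᵥ V⁻¹ *ᵥ (H *ᵥ θstar)) ≤
        Real.sqrt ((H *ᵥ θstar) ⬝ᵥ H⁻¹ *ᵥ (H *ᵥ θstar)) := Real.sqrt_le_sqrt h1
      _ = Real.sqrt (θstar ⬝ᵥ H *ᵥ θstar) := by rw [h2]
  rw [hquad]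
  calc Real.sqrt (w ⬝ᵥ V⁻¹ *ᵥ w) ≤
      Real.sqrt ((H *ᵥ θstar) ⬝ᵥ V⁻¹ *ᵥ (H *ᵥ θstar)) +
        (Real.sqrt (S ⬝ᵥ V⁻¹ *ᵥ S) + Real.sqrt (h ⬝ᵥ V⁻¹ *ᵥ h)) :=
      le_trans tri1 (by linarith)
    _ ≤ Real.sqrt (S ⬝ᵥ L⁻¹ *ᵥ S) + Real.sqrt (θstar ⬝ᵥ H *ᵥ θstar) +
        Real.sqrt (h ⬝ᵥ H⁻¹ *ᵥ h) := by linarith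
end
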